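/- Let n ≥ 1, let A, B ∈ ℙ_n with A B ≠ B A, and let t ∈ (0,1). Then there do not exist real numbers x > 0 and y > 0 such that A ♮_t B = x A + y B. -/

import Mathlib

open Matrix
open scoped ComplexOrder

/-- Real power `A^t = exp(t · log A)` of a Hermitian positive definite matrix, defined via
the functional calculus (spectral decomposition). -/
noncomputable def mpow {n : ℕ} (A : Matrix (Fin n) (Fin n) ℂ) (t : ℝ) :
    Matrix (Fin n) (Fin n) ℂ :=
  if hA : A.IsHermitian then
    (hA.eigenvectorUnitary : Matrix (Fin n) (Fin n) ℂ) *
      Matrix.diagonal (fun i => ((hA.eigenvalues i ^ t : ℝ) : ℂ)) *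
      (star (hA.eigenvectorUnitary : Matrix (Fin n) (Fin n) ℂ))
  else A

/-- Logarithm of a Hermitian positive definite matrix via the functional calculus. -/
noncomputable def mlog {n : ℕ} (A : Matrix (Fin n) (Fin n) ℂ) : Matrix (Fin n) (Fin n) ℂ :=
  if hA : A.IsHermitian then
    (hA.eigenvectorUnitary : Matrix (Fin n) (Fin n) ℂ) *
      Matrix.diagonal (fun i => ((Real.log (hA.eigenvalues i) : ℝ) : ℂ)) *
      (star (hA.eigenvectorUnitary : Matrix (Fin n) (Fin n) ℂ))
  else A

/-- Metric geometric mean `A # B = A^{1/2} (A^{-1/2} B A^{-1/2})^{1/2} A^{1/2}`. -/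
noncomputable def geomMean {n : ℕ} (A B : Matrix (Fin n) (Fin n) ℂ) :
    Matrix (Fin n) (Fin n) ℂ :=
  mpow A (1/2) * mpow (mpow A (-(1/2)) * B * mpow A (-(1/2))) (1/2) * mpow A (1/2)

/-- Weighted spectral geometric mean `A ♮_t B = (A⁻¹ # B)^t A (A⁻¹ # B)^t`. -/
noncomputable def spectralMean {n : ℕ} (t : ℝ) (A B : Matrix (Fin n) (Fin n) ℂ) :
    Matrix (Fin n) (Fin n) ℂ :=
  mpow (geomMean A⁻¹ B) t * A * mpow (geomMean A⁻¹ B) t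



section Aux
variable {n : ℕ}

/-- at most two positive roots of s^t = x + y s -/
lemma rpow_line_two_roots {t x y a b c : ℝ} (ht0 : 0 < t) (ht1 : t < 1)
    (ha : 0 ≤ a) (hab : a < b) (hbc : b < c)
    (hfa : a ^ t = x + y * a) (hfb : b ^ t = x + y * b) (hfc : c ^ t = x + y * c) : False := by
  have hca : 0 < c - a := by linarith
  set u : ℝ := (c - b) / (c - a) with hu_def
  set v : ℝ := (b - a) / (c - a) with hv_def
  have hu : 0 < u := by rw [hu_def]; apply div_pos <;> linarith
  have hv : 0 < v := by rw [hv_def]; apply div_pos <;> linarith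
  have huv : u + v = 1 := by
    rw [hu_def, hv_def, ← add_div, div_eq_one_iff_eq hca.ne']; ring
  have hb : u * a + v * c = b := by
    rw [hu_def, hv_def, div_mul_eq_mul_div, div_mul_eq_mul_div, ← add_div,
      div_eq_iff hca.ne']; ring
  have hc : 0 ≤ c := by linarith
  have hac : a ≠ c := by linarith
  have key := (Real.strictConcaveOn_rpow ht0 ht1).2 (Set.mem_Ici.mpr ha)
    (Set.mem_Ici.mpr hc) hac hu hv huv
  simp only [smul_eq_mul] at key
  rw [hb, hfa, hfb, hfc] at key
  have expand : u * (x + y * a) + v * (x + y * c) = (u + v) * x + y * (u * a + v * c) := by ring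
  rw [expand, huv, hb, one_mul] at key
  exact lt_irrefl _ key

lemma conj_posDef {P C : Matrix (Fin n) (Fin n) ℂ} (hP : P.PosDef) (hC : IsUnit C) :
    (Cᴴ * P * C).PosDef := by
  refine Matrix.PosDef.of_dotProduct_mulVec_pos (Matrix.isHermitian_conjTranspose_mul_mul C hP.1) (fun x hx => ?_)
  have hCx : C *ᵥ x ≠ 0 := by
    have hinj := Matrix.mulVec_injective_iff_isUnit.mpr hC
    intro h
    exact hx (hinj (by simpa using h))
  have key : star x ⬝ᵥ (Cᴴ * P * C) *ᵥ x = star (C *ᵥ x) ⬝ᵥ P *ᵥ (C *ᵥ x) := by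
    rw [star_mulVec, ← Matrix.dotProduct_mulVec, ← Matrix.mulVec_mulVec, ← Matrix.mulVec_mulVec,
      Matrix.dotProduct_mulVec _ Cᴴ]
  rw [key]
  exact hP.dotProduct_mulVec_pos hCx
end Aux


section CFC
variable {n : ℕ}

/-- General functional calculus on a Hermitian matrix via its eigendecomposition. -/
noncomputable def cfcH (f : ℝ → ℝ) {A : Matrix (Fin n) (Fin n) ℂ} (hA : A.IsHermitian) :
    Matrix (Fin n) (Fin n) ℂ :=
  (hA.eigenvectorUnitary : Matrix (Fin n) (Fin n) ℂ) *
    Matrix.diagonal (fun i => ((f (hA.eigenvalues i) : ℝ) : ℂ)) *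
    (star (hA.eigenvectorUnitary : Matrix (Fin n) (Fin n) ℂ))

lemma mpow_eq_cfcH {A : Matrix (Fin n) (Fin n) ℂ} (hA : A.IsHermitian) (t : ℝ) :
    mpow A t = cfcH (fun s => s ^ t) hA := by
  rw [mpow, dif_pos hA]; rfl

/-- exchange a diagonal past a matrix, applying a function. -/
lemma diag_exchange (M : Matrix (Fin n) (Fin n) ℂ) (d e : Fin n → ℝ) (f : ℝ → ℝ)
    (h : M * Matrix.diagonal (fun i => ((d i : ℝ) : ℂ)) =
      Matrix.diagonal (fun i => ((e i : ℝ) : ℂ)) * M) :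
    M * Matrix.diagonal (fun i => ((f (d i) : ℝ) : ℂ)) =
      Matrix.diagonal (fun i => ((f (e i) : ℝ) : ℂ)) * M := by
  ext i j
  have h1 : M i j * (d j : ℂ) = (e i : ℂ) * M i j := by
    have := congrFun (congrFun (congrArg (fun X : Matrix (Fin n) (Fin n) ℂ => (X : Fin n → Fin n → ℂ)) h) i) j
    simpa [Matrix.mul_diagonal, Matrix.diagonal_mul] using this
  simp only [Matrix.mul_diagonal, Matrix.diagonal_mul]
  rcases eq_or_ne (M i j) 0 with h0 | h0
  · simp [h0]
  · have hde : (d j : ℂ) = (e i : ℂ) := by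
      have : M i j * ((d j : ℂ) - (e i : ℂ)) = 0 := by linear_combination h1
      rcases mul_eq_zero.mp this with h' | h'
      · exact absurd h' h0
      · linear_combination h'
    have : d j = e i := by exact_mod_cast hde
    rw [this]; ring

/-- well-definedness: the functional calculus can be computed in any eigendecomposition. -/
lemma cfcH_eq_of_decomp {A : Matrix (Fin n) (Fin n) ℂ} (hA : A.IsHermitian) (f : ℝ → ℝ)
    (V : Matrix (Fin n) (Fin n) ℂ) (hV : V ∈ Matrix.unitaryGroup (Fin n) ℂ)
    (e : Fin n → ℝ)
    (hdec : A = V * Matrix.diagonal (fun i => ((e i : ℝ) : ℂ)) * star V) :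
    cfcH f hA = V * Matrix.diagonal (fun i => ((f (e i) : ℝ) : ℂ)) * star V := by
  set U : Matrix (Fin n) (Fin n) ℂ := (hA.eigenvectorUnitary : Matrix (Fin n) (Fin n) ℂ) with hU
  have hUsU : star U * U = 1 := Unitary.coe_star_mul_self hA.eigenvectorUnitary
  have hUUs : U * star U = 1 := Unitary.coe_mul_star_self hA.eigenvectorUnitary
  have hVsV : star V * V = 1 := hV.1
  have hVVs : V * star V = 1 := hV.2
  have hspec : A = U * Matrix.diagonal (fun i => ((hA.eigenvalues i : ℝ) : ℂ)) * star U := by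
    exact hA.spectral_theorem
  set M : Matrix (Fin n) (Fin n) ℂ := star V * U with hM
  have hMstar : star M = star U * V := by rw [hM, Matrix.star_mul, star_star]
  have hMsM : star M * M = 1 := by
    rw [hMstar, hM]
    calc star U * V * (star V * U) = star U * (V * star V) * U := by noncomm_ring
      _ = 1 := by rw [hVVs, Matrix.mul_one, hUsU]
  have hMMs : M * star M = 1 := by
    rw [hMstar, hM]
    calc star V * U * (star U * V) = star V * (U * star U) * V := by noncomm_ring
      _ = 1 := by rw [hUUs, Matrix.mul_one, hVsV]
  have hMexch : M * Matrix.diagonal (fun i => ((hA.eigenvalues i : ℝ) : ℂ)) =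
      Matrix.diagonal (fun i => ((e i : ℝ) : ℂ)) * M := by
    have h1 : star V * A * V = Matrix.diagonal (fun i => ((e i : ℝ) : ℂ)) := by
      conv_lhs => rw [hdec]
      calc star V * (V * Matrix.diagonal (fun i => ((e i : ℝ) : ℂ)) * star V) * V
          = (star V * V) * Matrix.diagonal (fun i => ((e i : ℝ) : ℂ)) * (star V * V) := by
            noncomm_ring
        _ = Matrix.diagonal (fun i => ((e i : ℝ) : ℂ)) := by
            rw [hVsV, Matrix.one_mul, Matrix.mul_one]
    have h2 : star V * A * V =
        M * Matrix.diagonal (fun i => ((hA.eigenvalues i : ℝ) : ℂ)) * star M := by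
      conv_lhs => rw [hspec]
      rw [hM, hMstar]
      noncomm_ring
    have h3 : M * Matrix.diagonal (fun i => ((hA.eigenvalues i : ℝ) : ℂ)) * star M =
        Matrix.diagonal (fun i => ((e i : ℝ) : ℂ)) := by rw [← h2, h1]
    calc M * Matrix.diagonal (fun i => ((hA.eigenvalues i : ℝ) : ℂ))
        = M * Matrix.diagonal (fun i => ((hA.eigenvalues i : ℝ) : ℂ)) * (star M * M) := by
          rw [hMsM, Matrix.mul_one]
      _ = (M * Matrix.diagonal (fun i => ((hA.eigenvalues i : ℝ) : ℂ)) * star M) * M := by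
          noncomm_ring
      _ = Matrix.diagonal (fun i => ((e i : ℝ) : ℂ)) * M := by rw [h3]
  have hfexch := diag_exchange M hA.eigenvalues e f hMexch
  have hUeq : U = V * M := by
    rw [hM, ← Matrix.mul_assoc, hVVs, Matrix.one_mul]
  rw [cfcH, ← hU, hUeq, Matrix.star_mul]
  calc V * M * Matrix.diagonal (fun i => ((f (hA.eigenvalues i) : ℝ) : ℂ)) * (star M * star V)
      = V * (M * Matrix.diagonal (fun i => ((f (hA.eigenvalues i) : ℝ) : ℂ))) * star M * star V := by
        noncomm_ring
    _ = V * (Matrix.diagonal (fun i => ((f (e i) : ℝ) : ℂ)) * M) * star M * star V := by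
        rw [hfexch]
    _ = V * Matrix.diagonal (fun i => ((f (e i) : ℝ) : ℂ)) * (M * star M) * star V := by
        noncomm_ring
    _ = V * Matrix.diagonal (fun i => ((f (e i) : ℝ) : ℂ)) * star V := by
        rw [hMMs, Matrix.mul_one]


lemma eigU_mem {A : Matrix (Fin n) (Fin n) ℂ} (hA : A.IsHermitian) :
    (hA.eigenvectorUnitary : Matrix (Fin n) (Fin n) ℂ) ∈ Matrix.unitaryGroup (Fin n) ℂ :=
  hA.eigenvectorUnitary.2

lemma cfcH_congr {A : Matrix (Fin n) (Fin n) ℂ} (hA : A.IsHermitian) {f g : ℝ → ℝ}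
    (h : ∀ i, f (hA.eigenvalues i) = g (hA.eigenvalues i)) : cfcH f hA = cfcH g hA := by
  have : (fun i => ((f (hA.eigenvalues i) : ℝ) : ℂ)) =
      (fun i => ((g (hA.eigenvalues i) : ℝ) : ℂ)) := by
    funext i; rw [h i]
  rw [cfcH, cfcH, this]

lemma cfcH_isHermitian {A : Matrix (Fin n) (Fin n) ℂ} (hA : A.IsHermitian) (f : ℝ → ℝ) :
    (cfcH f hA).IsHermitian := by
  set U : Matrix (Fin n) (Fin n) ℂ := (hA.eigenvectorUnitary : Matrix (Fin n) (Fin n) ℂ)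
  have hD : (Matrix.diagonal (fun i => ((f (hA.eigenvalues i) : ℝ) : ℂ))).IsHermitian := by
    apply Matrix.isHermitian_diagonal_of_self_adjoint
    funext i
    simp [Pi.star_apply, Complex.conj_ofReal]
  have : cfcH f hA = (star U)ᴴ * Matrix.diagonal (fun i => ((f (hA.eigenvalues i) : ℝ) : ℂ)) *
      (star U) := by
    rw [cfcH]
    simp [Matrix.star_eq_conjTranspose]
    rfl
  rw [this]
  exact Matrix.isHermitian_conjTranspose_mul_mul _ hD

lemma cfcH_posDef {A : Matrix (Fin n) (Fin n) ℂ} (hA : A.IsHermitian) (f : ℝ → ℝ)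
    (hf : ∀ i, 0 < f (hA.eigenvalues i)) : (cfcH f hA).PosDef := by
  set U : Matrix (Fin n) (Fin n) ℂ := (hA.eigenvectorUnitary : Matrix (Fin n) (Fin n) ℂ)
  have hD : (Matrix.diagonal (fun i => ((f (hA.eigenvalues i) : ℝ) : ℂ))).PosDef := by
    apply Matrix.PosDef.diagonal
    intro i
    exact_mod_cast Complex.zero_lt_real.mpr (hf i)
  have hUnit : IsUnit (star U) :=
    ⟨⟨star U, U, Unitary.coe_star_mul_self hA.eigenvectorUnitary,
      Unitary.coe_mul_star_self hA.eigenvectorUnitary⟩, rfl⟩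
  have : cfcH f hA = (star U)ᴴ * Matrix.diagonal (fun i => ((f (hA.eigenvalues i) : ℝ) : ℂ)) *
      (star U) := by
    rw [cfcH]
    simp [Matrix.star_eq_conjTranspose]
    rfl
  rw [this]
  exact conj_posDef hD hUnit

lemma cfcH_mul {A : Matrix (Fin n) (Fin n) ℂ} (hA : A.IsHermitian) (f g : ℝ → ℝ) :
    cfcH f hA * cfcH g hA = cfcH (fun s => f s * g s) hA := by
  set U : Matrix (Fin n) (Fin n) ℂ := (hA.eigenvectorUnitary : Matrix (Fin n) (Fin n) ℂ) with hU
  have hUsU : star U * U = 1 := Unitary.coe_star_mul_self hA.eigenvectorUnitary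
  rw [cfcH, cfcH, cfcH, ← hU]
  calc U * Matrix.diagonal (fun i => ((f (hA.eigenvalues i) : ℝ) : ℂ)) * star U *
        (U * Matrix.diagonal (fun i => ((g (hA.eigenvalues i) : ℝ) : ℂ)) * star U)
      = U * (Matrix.diagonal (fun i => ((f (hA.eigenvalues i) : ℝ) : ℂ)) * (star U * U) *
          Matrix.diagonal (fun i => ((g (hA.eigenvalues i) : ℝ) : ℂ))) * star U := by
        noncomm_ring
    _ = U * (Matrix.diagonal (fun i => ((f (hA.eigenvalues i) : ℝ) : ℂ)) *
          Matrix.diagonal (fun i => ((g (hA.eigenvalues i) : ℝ) : ℂ))) * star U := by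
        rw [hUsU, Matrix.mul_one]
    _ = U * Matrix.diagonal (fun i => ((f (hA.eigenvalues i) * g (hA.eigenvalues i) : ℝ) : ℂ)) *
          star U := by
        rw [Matrix.diagonal_mul_diagonal]
        congr 2
        funext i
        push_cast
        ring

lemma cfcH_one {A : Matrix (Fin n) (Fin n) ℂ} (hA : A.IsHermitian) :
    cfcH (fun _ => 1) hA = 1 := by
  have hUUs : (hA.eigenvectorUnitary : Matrix (Fin n) (Fin n) ℂ) *
      star (hA.eigenvectorUnitary : Matrix (Fin n) (Fin n) ℂ) = 1 :=
    Unitary.coe_mul_star_self hA.eigenvectorUnitary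
  rw [cfcH]
  simp only [Complex.ofReal_one]
  rw [Matrix.diagonal_one, Matrix.mul_one, hUUs]

lemma cfcH_id {A : Matrix (Fin n) (Fin n) ℂ} (hA : A.IsHermitian) :
    cfcH (fun s => s) hA = A := by
  rw [cfcH]
  conv_rhs => rw [hA.spectral_theorem]
  rfl

lemma cfcH_comp {A : Matrix (Fin n) (Fin n) ℂ} (hA : A.IsHermitian) (f g : ℝ → ℝ)
    (hB : (cfcH f hA).IsHermitian) : cfcH g hB = cfcH (fun s => g (f s)) hA :=
  cfcH_eq_of_decomp hB g _ (eigU_mem hA) (fun i => f (hA.eigenvalues i)) rfl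

lemma cfcH_inv {A : Matrix (Fin n) (Fin n) ℂ} (hA : A.PosDef) (hAi : (A⁻¹).IsHermitian)
    (f : ℝ → ℝ) : cfcH f hAi = cfcH (fun s => f s⁻¹) hA.1 := by
  set U : Matrix (Fin n) (Fin n) ℂ := (hA.1.eigenvectorUnitary : Matrix (Fin n) (Fin n) ℂ)
    with hU
  have hUsU : star U * U = 1 := Unitary.coe_star_mul_self hA.1.eigenvectorUnitary
  have hUUs : U * star U = 1 := Unitary.coe_mul_star_self hA.1.eigenvectorUnitary
  have hspec : A = U * Matrix.diagonal (fun i => ((hA.1.eigenvalues i : ℝ) : ℂ)) * star U := by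
    exact hA.1.spectral_theorem
  have hdec : A⁻¹ = U * Matrix.diagonal (fun i => (((hA.1.eigenvalues i)⁻¹ : ℝ) : ℂ)) * star U := by
    apply Matrix.inv_eq_right_inv
    have h4 : A * (U * Matrix.diagonal (fun i => (((hA.1.eigenvalues i)⁻¹ : ℝ) : ℂ)) * star U) =
        U * Matrix.diagonal (fun i => ((hA.1.eigenvalues i : ℝ) : ℂ)) * star U *
          (U * Matrix.diagonal (fun i => (((hA.1.eigenvalues i)⁻¹ : ℝ) : ℂ)) * star U) := by
      rw [← hspec]
    rw [h4]
    calc U * Matrix.diagonal (fun i => ((hA.1.eigenvalues i : ℝ) : ℂ)) * star U *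
          (U * Matrix.diagonal (fun i => (((hA.1.eigenvalues i)⁻¹ : ℝ) : ℂ)) * star U)
        = U * (Matrix.diagonal (fun i => ((hA.1.eigenvalues i : ℝ) : ℂ)) * (star U * U) *
            Matrix.diagonal (fun i => (((hA.1.eigenvalues i)⁻¹ : ℝ) : ℂ))) * star U := by
          noncomm_ring
      _ = U * (Matrix.diagonal (fun i => ((hA.1.eigenvalues i : ℝ) : ℂ)) *
            Matrix.diagonal (fun i => (((hA.1.eigenvalues i)⁻¹ : ℝ) : ℂ))) * star U := by
          rw [hUsU, Matrix.mul_one]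
      _ = U * (1 : Matrix (Fin n) (Fin n) ℂ) * star U := by
          rw [Matrix.diagonal_mul_diagonal]
          have hfun : (fun i => ((hA.1.eigenvalues i : ℝ) : ℂ) * (((hA.1.eigenvalues i)⁻¹ : ℝ) : ℂ))
              = fun _ => (1 : ℂ) := by
            funext i
            have hpos := hA.eigenvalues_pos i
            push_cast
            field_simp
          rw [hfun, Matrix.diagonal_one]
      _ = 1 := by rw [Matrix.mul_one, hUUs]
  rw [cfcH_eq_of_decomp hAi f U (eigU_mem hA.1) (fun i => (hA.1.eigenvalues i)⁻¹) hdec]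
  rfl
end CFC


section MPow
variable {n : ℕ}

lemma mpow_posDef {A : Matrix (Fin n) (Fin n) ℂ} (hA : A.PosDef) (t : ℝ) :
    (mpow A t).PosDef := by
  rw [mpow_eq_cfcH hA.1]
  exact cfcH_posDef hA.1 _ (fun i => Real.rpow_pos_of_pos (hA.eigenvalues_pos i) t)

lemma mpow_mul_mpow {A : Matrix (Fin n) (Fin n) ℂ} (hA : A.PosDef) (s t : ℝ) :
    mpow A s * mpow A t = mpow A (s + t) := by
  rw [mpow_eq_cfcH hA.1, mpow_eq_cfcH hA.1, mpow_eq_cfcH hA.1, cfcH_mul]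
  exact cfcH_congr hA.1 (fun i => (Real.rpow_add (hA.eigenvalues_pos i) s t).symm)

lemma mpow_zero' {A : Matrix (Fin n) (Fin n) ℂ} (hA : A.IsHermitian) : mpow A 0 = 1 := by
  rw [mpow_eq_cfcH hA, cfcH_congr hA (g := fun _ => 1) (fun i => Real.rpow_zero _), cfcH_one]

lemma mpow_one' {A : Matrix (Fin n) (Fin n) ℂ} (hA : A.IsHermitian) : mpow A 1 = A := by
  rw [mpow_eq_cfcH hA, cfcH_congr hA (g := fun s => s) (fun i => Real.rpow_one _), cfcH_id]

lemma mpow_inv' {A : Matrix (Fin n) (Fin n) ℂ} (hA : A.PosDef) (t : ℝ) :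
    mpow A⁻¹ t = mpow A (-t) := by
  rw [mpow_eq_cfcH hA.1.inv, cfcH_inv hA hA.1.inv, mpow_eq_cfcH hA.1]
  refine cfcH_congr hA.1 (fun i => ?_)
  have hpos := hA.eigenvalues_pos i
  rw [Real.inv_rpow hpos.le, ← Real.rpow_neg hpos.le]

lemma riccati_aux {Q R T A B M : Matrix (Fin n) (Fin n) ℂ}
    (hQR : Q * R = 1) (hRQ : R * Q = 1) (hA : A = R * R) (hTT : T * T = R * B * R)
    (hM : M = Q * T * Q) : M * A * M = B := by
  subst hM hA
  calc Q * T * Q * (R * R) * (Q * T * Q)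
      = Q * T * ((Q * R) * (R * Q)) * T * Q := by noncomm_ring
    _ = Q * (T * T) * Q := by rw [hQR, hRQ]; noncomm_ring
    _ = Q * (R * B * R) * Q := by rw [hTT]
    _ = (Q * R) * B * (R * Q) := by noncomm_ring
    _ = B := by rw [hQR, hRQ, Matrix.one_mul, Matrix.mul_one]

lemma geomMean_facts {A B : Matrix (Fin n) (Fin n) ℂ} (hA : A.PosDef) (hB : B.PosDef) :
    (geomMean A⁻¹ B).PosDef ∧ geomMean A⁻¹ B * A * geomMean A⁻¹ B = B := by
  have hQ' : mpow A⁻¹ (1/2) = mpow A (-(1/2)) := mpow_inv' hA _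
  have hR' : mpow A⁻¹ (-(1/2)) = mpow A (1/2) := by rw [mpow_inv' hA]; norm_num
  have hQpd : (mpow A⁻¹ (1/2)).PosDef := mpow_posDef hA.inv _
  have hRpd : (mpow A⁻¹ (-(1/2))).PosDef := mpow_posDef hA.inv _
  have hQR : mpow A⁻¹ (1/2) * mpow A⁻¹ (-(1/2)) = 1 := by
    rw [hQ', hR', mpow_mul_mpow hA]
    norm_num [mpow_zero' hA.1]
  have hRQ : mpow A⁻¹ (-(1/2)) * mpow A⁻¹ (1/2) = 1 := by
    rw [hQ', hR', mpow_mul_mpow hA]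
    norm_num [mpow_zero' hA.1]
  have hAeq : A = mpow A⁻¹ (-(1/2)) * mpow A⁻¹ (-(1/2)) := by
    rw [hR', mpow_mul_mpow hA]
    norm_num [mpow_one' hA.1]
  have hSpd : (mpow A⁻¹ (-(1/2)) * B * mpow A⁻¹ (-(1/2))).PosDef := by
    have h := conj_posDef hB hRpd.isUnit
    rwa [hRpd.1.eq] at h
  have hTpd : (mpow (mpow A⁻¹ (-(1/2)) * B * mpow A⁻¹ (-(1/2))) (1/2)).PosDef :=
    mpow_posDef hSpd _
  have hTT : mpow (mpow A⁻¹ (-(1/2)) * B * mpow A⁻¹ (-(1/2))) (1/2) *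
      mpow (mpow A⁻¹ (-(1/2)) * B * mpow A⁻¹ (-(1/2))) (1/2) =
      mpow A⁻¹ (-(1/2)) * B * mpow A⁻¹ (-(1/2)) := by
    rw [mpow_mul_mpow hSpd]
    norm_num [mpow_one' hSpd.1]
  have hM : geomMean A⁻¹ B = mpow A⁻¹ (1/2) *
      mpow (mpow A⁻¹ (-(1/2)) * B * mpow A⁻¹ (-(1/2))) (1/2) * mpow A⁻¹ (1/2) := rfl
  constructor
  · rw [hM]
    have h := conj_posDef hTpd hQpd.isUnit
    rwa [hQpd.1.eq] at h
  · exact riccati_aux hQR hRQ hAeq hTT hM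

end MPow


section Main
variable {n : ℕ}

lemma unitary_isUnit {V : Matrix (Fin n) (Fin n) ℂ} (hV : V ∈ Matrix.unitaryGroup (Fin n) ℂ) :
    IsUnit V := ⟨⟨V, star V, hV.2, hV.1⟩, rfl⟩

lemma key_commute {A B C : Matrix (Fin n) (Fin n) ℂ} (hA : A.PosDef) (hC : C.PosDef)
    (hCAC : C * A * C = B) {t x y : ℝ} (ht0 : 0 < t) (ht1 : t < 1)
    (heq : mpow C t * A * mpow C t = x • A + y • B) : A * B = B * A := by
  set V : Matrix (Fin n) (Fin n) ℂ := (hC.1.eigenvectorUnitary : Matrix (Fin n) (Fin n) ℂ)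
    with hV
  have hVmem : V ∈ Matrix.unitaryGroup (Fin n) ℂ := hC.1.eigenvectorUnitary.2
  have hVsV : star V * V = 1 := hVmem.1
  have hVVs : V * star V = 1 := hVmem.2
  set μ : Fin n → ℝ := hC.1.eigenvalues with hμ
  have hμpos : ∀ i, 0 < μ i := fun i => hC.eigenvalues_pos i
  have hspec : C = V * Matrix.diagonal (fun i => ((μ i : ℝ) : ℂ)) * star V := by
    exact hC.1.spectral_theorem
  have hpow : mpow C t = V * Matrix.diagonal (fun i => ((μ i ^ t : ℝ) : ℂ)) * star V := by
    rw [mpow, dif_pos hC.1]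
  set A' : Matrix (Fin n) (Fin n) ℂ := star V * A * V with hA'
  have hA'pd : A'.PosDef := by
    have h := conj_posDef hA (unitary_isUnit hVmem)
    rw [← Matrix.star_eq_conjTranspose] at h
    rw [hA']
    exact h
  -- matrix-level equation conjugated by V
  have h1 : star V * (mpow C t * A * mpow C t) * V =
      Matrix.diagonal (fun i => ((μ i ^ t : ℝ) : ℂ)) * A' *
        Matrix.diagonal (fun i => ((μ i ^ t : ℝ) : ℂ)) := by
    rw [hpow]
    calc star V * (V * Matrix.diagonal (fun i => ((μ i ^ t : ℝ) : ℂ)) * star V * A *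
          (V * Matrix.diagonal (fun i => ((μ i ^ t : ℝ) : ℂ)) * star V)) * V
        = (star V * V) * Matrix.diagonal (fun i => ((μ i ^ t : ℝ) : ℂ)) * (star V * A * V) *
            Matrix.diagonal (fun i => ((μ i ^ t : ℝ) : ℂ)) * (star V * V) := by noncomm_ring
      _ = Matrix.diagonal (fun i => ((μ i ^ t : ℝ) : ℂ)) * A' *
            Matrix.diagonal (fun i => ((μ i ^ t : ℝ) : ℂ)) := by
          rw [hVsV, hA']
          noncomm_ring
  have h2 : star V * (C * A * C) * V =
      Matrix.diagonal (fun i => ((μ i : ℝ) : ℂ)) * A' *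
        Matrix.diagonal (fun i => ((μ i : ℝ) : ℂ)) := by
    conv_lhs => rw [hspec]
    calc star V * (V * Matrix.diagonal (fun i => ((μ i : ℝ) : ℂ)) * star V * A *
          (V * Matrix.diagonal (fun i => ((μ i : ℝ) : ℂ)) * star V)) * V
        = (star V * V) * Matrix.diagonal (fun i => ((μ i : ℝ) : ℂ)) * (star V * A * V) *
            Matrix.diagonal (fun i => ((μ i : ℝ) : ℂ)) * (star V * V) := by noncomm_ring
      _ = Matrix.diagonal (fun i => ((μ i : ℝ) : ℂ)) * A' *
            Matrix.diagonal (fun i => ((μ i : ℝ) : ℂ)) := by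
          rw [hVsV, hA']
          noncomm_ring
  have hE : Matrix.diagonal (fun i => ((μ i ^ t : ℝ) : ℂ)) * A' *
      Matrix.diagonal (fun i => ((μ i ^ t : ℝ) : ℂ)) =
      x • A' + y • (Matrix.diagonal (fun i => ((μ i : ℝ) : ℂ)) * A' *
        Matrix.diagonal (fun i => ((μ i : ℝ) : ℂ))) := by
    rw [← h1, ← h2, heq, ← hCAC]
    rw [Matrix.mul_add, Matrix.add_mul, Matrix.mul_smul, Matrix.mul_smul,
      Matrix.smul_mul, Matrix.smul_mul, hA']
  -- entrywise consequences
  have hentry : ∀ i j, A' i j ≠ 0 → (μ i * μ j) ^ t = x + y * (μ i * μ j) := by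
    intro i j hne
    have h3 := Matrix.ext_iff.mpr hE i j
    simp only [Matrix.mul_diagonal, Matrix.diagonal_mul, Matrix.add_apply, Matrix.smul_apply,
      Complex.real_smul] at h3
    have hfac : (((μ i ^ t : ℝ) : ℂ) * ((μ j ^ t : ℝ) : ℂ) - (x : ℂ) -
        (y : ℂ) * ((μ i : ℝ) : ℂ) * ((μ j : ℝ) : ℂ)) * A' i j = 0 := by
      linear_combination h3
    rcases mul_eq_zero.mp hfac with h' | h'
    · have hr : ((μ i ^ t * μ j ^ t - x - y * (μ i * μ j) : ℝ) : ℂ) = 0 := by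
        push_cast
        linear_combination h'
      have hr2 : μ i ^ t * μ j ^ t - x - y * (μ i * μ j) = 0 := by exact_mod_cast hr
      rw [Real.mul_rpow (hμpos i).le (hμpos j).le]
      linarith
    · exact absurd h' hne
  have hdiag : ∀ i, A' i i ≠ 0 := by
    intro i
    have hsingle : (Pi.single i 1 : Fin n → ℂ) ≠ 0 := by
      intro h
      have := congrFun h i
      simp at this
    have hpos := hA'pd.dotProduct_mulVec_pos hsingle
    have hval : star (Pi.single i 1 : Fin n → ℂ) ⬝ᵥ A' *ᵥ (Pi.single i 1) = A' i i := by
      simp [Matrix.mulVec_single, dotProduct, Pi.single_apply, apply_ite]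
    rw [hval] at hpos
    exact hpos.ne'
  have hcomm : ∀ i j, A' i j ≠ 0 → μ i = μ j := by
    intro i j hne
    by_contra hne2
    have hri := hentry i i (hdiag i)
    have hrj := hentry j j (hdiag j)
    have hrij := hentry i j hne
    rcases lt_or_gt_of_ne hne2 with h | h
    · exact rpow_line_two_roots ht0 ht1 (mul_nonneg (hμpos i).le (hμpos i).le)
        (mul_lt_mul_of_pos_left h (hμpos i))
        (mul_lt_mul_of_pos_right h (hμpos j)) hri hrij hrj
    · have hrij' : (μ j * μ i) ^ t = x + y * (μ j * μ i) := by
        rwa [mul_comm] at hrij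
      exact rpow_line_two_roots ht0 ht1 (mul_nonneg (hμpos j).le (hμpos j).le)
        (mul_lt_mul_of_pos_left h (hμpos j))
        (mul_lt_mul_of_pos_right h (hμpos i)) hrj hrij' hri
  have hDA' : Matrix.diagonal (fun i => ((μ i : ℝ) : ℂ)) * A' =
      A' * Matrix.diagonal (fun i => ((μ i : ℝ) : ℂ)) := by
    ext i j
    simp only [Matrix.mul_diagonal, Matrix.diagonal_mul]
    rcases eq_or_ne (A' i j) 0 with h0 | h0
    · simp [h0]
    · rw [hcomm i j h0]
      ring
  have hCA : C * A = A * C := by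
    have e1 : C * A = V * (Matrix.diagonal (fun i => ((μ i : ℝ) : ℂ)) * A') * star V := by
      conv_lhs => rw [hspec]
      calc V * Matrix.diagonal (fun i => ((μ i : ℝ) : ℂ)) * star V * A
          = V * Matrix.diagonal (fun i => ((μ i : ℝ) : ℂ)) * star V * A * (V * star V) := by
            rw [hVVs, Matrix.mul_one]
        _ = V * (Matrix.diagonal (fun i => ((μ i : ℝ) : ℂ)) * (star V * A * V)) * star V := by
            noncomm_ring
        _ = V * (Matrix.diagonal (fun i => ((μ i : ℝ) : ℂ)) * A') * star V := by rw [hA']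
    have e2 : A * C = V * (A' * Matrix.diagonal (fun i => ((μ i : ℝ) : ℂ))) * star V := by
      conv_lhs => rw [hspec]
      calc A * (V * Matrix.diagonal (fun i => ((μ i : ℝ) : ℂ)) * star V)
          = (V * star V) * (A * (V * Matrix.diagonal (fun i => ((μ i : ℝ) : ℂ)) * star V)) := by
            rw [hVVs, Matrix.one_mul]
        _ = V * ((star V * A * V) * Matrix.diagonal (fun i => ((μ i : ℝ) : ℂ))) * star V := by
            noncomm_ring
        _ = V * (A' * Matrix.diagonal (fun i => ((μ i : ℝ) : ℂ))) * star V := by rw [hA']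
    rw [e1, e2, hDA']
  calc A * B = A * (C * A * C) := by rw [hCAC]
    _ = (A * C) * (A * C) := by noncomm_ring
    _ = (C * A) * (C * A) := by rw [hCA]
    _ = (C * A * C) * A := by noncomm_ring
    _ = B * A := by rw [hCAC]

end Main

theorem spectralMean_not_linear_sum {n : ℕ} (hn : 1 ≤ n) (A B : Matrix (Fin n) (Fin n) ℂ)
    (hA : A.PosDef) (hB : B.PosDef) (hAB : A * B ≠ B * A) (t : ℝ) (ht : t ∈ Set.Ioo (0 : ℝ) 1) :
    ¬∃ x y : ℝ, 0 < x ∧ 0 < y ∧ spectralMean t A B = x • A + y • B := by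
  rintro ⟨x, y, hx, hy, heq⟩
  obtain ⟨hCpd, hCAC⟩ := geomMean_facts hA hB
  have heq' : mpow (geomMean A⁻¹ B) t * A * mpow (geomMean A⁻¹ B) t = x • A + y • B := heq
  exact hAB (key_commute hA hCpd hCAC ht.1 ht.2 heq')
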